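/- Let q = p^s be a prime power, let n, m ≥ 1 be integers, let H ∈ F_q^{m×n} be a matrix, let u ∈ F_q^m, and let f : F_q^n → ℂ. Define g : F_q^n → ℂ by g(x) = Σ_{s ∈ F_q^m} conj(χ_s(u)) · f(x − sH). Then for every y ∈ F_q^n, the normalized Fourier transform of g satisfies g̃(y) = q^m · f̃(y) if Hy^⊤ = u, and g̃(y) = 0 otherwise. -/

import Mathlib

/-- The additive character `χ_y(x) = exp(2πi·tr(x·y)/p)` on `F^ι`, where
`tr : F → ZMod p` is the absolute trace and `x·y = Σ_i x_i y_i`. -/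
noncomputable def addChar (p : ℕ) (F : Type*) [Field F] [Fintype F] [Algebra (ZMod p) F]
    {ι : Type*} [Fintype ι] (y x : ι → F) : ℂ :=
  Complex.exp (2 * Real.pi * Complex.I *
    ((Algebra.trace (ZMod p) F (∑ i, x i * y i)).val : ℂ) / p)

section
variable (p : ℕ) [Fact p.Prime] (F : Type*) [Field F] [Fintype F] [Algebra (ZMod p) F]

noncomputable def psiF : AddChar F ℂ :=
  (ZMod.stdAddChar (N := p)).compAddMonoidHom (Algebra.trace (ZMod p) F).toAddMonoidHom

lemma stdAddChar_val (a : ZMod p) :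
    ZMod.stdAddChar a = Complex.exp (2 * Real.pi * Complex.I * (a.val : ℂ) / p) := by
  have := ZMod.stdAddChar_coe (N := p) (a.val : ℤ)
  rw [Int.cast_natCast, Int.cast_natCast, ZMod.natCast_val, ZMod.cast_id] at this
  exact this

lemma psiF_apply (a : F) :
    psiF p F a = Complex.exp (2 * Real.pi * Complex.I *
      (((Algebra.trace (ZMod p) F a).val : ℂ)) / p) := stdAddChar_val p _

lemma psiF_ne_one : psiF p F ≠ 1 := by
  haveI : CharP F p := charP_of_injective_ringHom (algebraMap (ZMod p) F).injective p
  have hring : ringChar F = p := ringChar.eq F p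
  subst hring
  haveI : NeZero (ringChar F) := ⟨(Fact.out : (ringChar F).Prime).ne_zero⟩
  intro h
  obtain ⟨b, hb⟩ := FiniteField.trace_to_zmod_nondegenerate F (a := 1) one_ne_zero
  rw [one_mul] at hb
  apply hb
  have : psiF (ringChar F) F b = 1 := by rw [h]; rfl
  have h2 : ZMod.stdAddChar (N := ringChar F) (Algebra.trace (ZMod (ringChar F)) F b)
      = ZMod.stdAddChar (N := ringChar F) 0 := by
    rw [AddChar.map_zero_eq_one]; exact this
  exact ZMod.injective_stdAddChar h2

lemma psiF_primitive : (psiF p F).IsPrimitive :=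
  AddChar.IsPrimitive.of_ne_one (psiF_ne_one p F)

lemma psiF_sum_mulShift [DecidableEq F] (b : F) :
    ∑ t : F, psiF p F (t * b) = if b = 0 then (Fintype.card F : ℂ) else 0 := by
  simpa using AddChar.sum_mulShift b (psiF_primitive p F)

lemma psiF_conj (a : F) : (starRingEnd ℂ) (psiF p F a) = psiF p F (-a) := by
  haveI : CharP F p := charP_of_injective_ringHom (algebraMap (ZMod p) F).injective p
  have hr : 0 < ringChar F := by rw [ringChar.eq F p]; exact (Fact.out : p.Prime).pos
  rw [AddChar.starComp_apply hr, AddChar.inv_apply]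

lemma psiF_map_sum {ι : Type*} (s : Finset ι) (a : ι → F) :
    psiF p F (∑ i ∈ s, a i) = ∏ i ∈ s, psiF p F (a i) := by
  classical
  induction s using Finset.induction_on with
  | empty => simp [AddChar.map_zero_eq_one]
  | insert _ _ h ih => rw [Finset.sum_insert h, Finset.prod_insert h, AddChar.map_add_eq_mul, ih]
end

lemma addChar_eq_psiF (p : ℕ) [Fact p.Prime] (F : Type*) [Field F] [Fintype F]
    [Algebra (ZMod p) F] {ι : Type*} [Fintype ι] (y x : ι → F) :
    addChar p F y x = psiF p F (∑ i, x i * y i) := (psiF_apply p F _).symm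


/-- Core computation of Regev's reduction: for
`g(x) = Σ_{s∈F_q^m} conj(χ_s(u)) · f(x − sH)`, the normalized Fourier transform
satisfies `g̃(y) = q^m · f̃(y)` if `Hy = u` and `g̃(y) = 0` otherwise. -/
theorem regev_fourier_identity (p : ℕ) [Fact p.Prime] (F : Type*) [Field F] [Fintype F]
    [DecidableEq F] [Algebra (ZMod p) F] (q : ℕ) (hq : Fintype.card F = q)
    (n m : ℕ) (hn : 1 ≤ n) (hm : 1 ≤ m)
    (H : Matrix (Fin m) (Fin n) F) (u : Fin m → F)
    (f g : (Fin n → F) → ℂ)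
    (hg : ∀ x : Fin n → F,
      g x = ∑ s : Fin m → F, (starRingEnd ℂ) (addChar p F s u) * f (x - Matrix.vecMul s H))
    (y : Fin n → F) :
    (1 / (Real.sqrt q : ℂ) ^ n) * ∑ x : Fin n → F, addChar p F y x * g x
      = if Matrix.mulVec H y = u then
          (q : ℂ) ^ m * ((1 / (Real.sqrt q : ℂ) ^ n) * ∑ x : Fin n → F, addChar p F y x * f x)
        else 0 := by
  set ψ := psiF p F with hψ
  set S := ∑ x : Fin n → F, addChar p F y x * f x with hS
  -- inner sum transform
  have hinner : ∀ s : Fin m → F,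
      ∑ x : Fin n → F, addChar p F y x * f (x - Matrix.vecMul s H)
        = ψ (∑ j, s j * Matrix.mulVec H y j) * S := by
    intro s
    set c := Matrix.vecMul s H with hc
    have h1 : ∑ x : Fin n → F, addChar p F y x * f (x - c)
        = ∑ x : Fin n → F, addChar p F y (x + c) * f x := by
      refine (Fintype.sum_equiv (Equiv.addRight c)
        (fun x => addChar p F y (x + c) * f x)
        (fun z => addChar p F y z * f (z - c)) ?_).symm
      intro x
      simp [Equiv.addRight]
    rw [h1]
    have h2 : ∀ x : Fin n → F, addChar p F y (x + c)
        = addChar p F y x * ψ (∑ i, c i * y i) := by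
      intro x
      rw [addChar_eq_psiF, addChar_eq_psiF, hψ]
      rw [← AddChar.map_add_eq_mul]
      congr 1
      rw [← Finset.sum_add_distrib]
      exact Finset.sum_congr rfl fun i _ => by simp [add_mul]
    have h3 : (∑ i, c i * y i) = ∑ j, s j * Matrix.mulVec H y j := by
      have := Matrix.dotProduct_mulVec s H y
      simpa [dotProduct, hc] using this.symm
    simp_rw [h2, h3]
    rw [hS, Finset.mul_sum]
    exact Finset.sum_congr rfl fun x _ => by ring
  have hconj : ∀ s : Fin m → F, (starRingEnd ℂ) (addChar p F s u)
      = ψ (-∑ i, u i * s i) := by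
    intro s
    rw [addChar_eq_psiF, hψ, psiF_conj]
  have hmain : ∑ x : Fin n → F, addChar p F y x * g x
      = (∑ s : Fin m → F, ψ (∑ j, s j * (Matrix.mulVec H y j - u j))) * S := by
    simp_rw [hg, Finset.mul_sum]
    rw [Finset.sum_comm]
    calc ∑ s : Fin m → F, ∑ x : Fin n → F,
          addChar p F y x * ((starRingEnd ℂ) (addChar p F s u) * f (x - Matrix.vecMul s H))
        = ∑ s : Fin m → F, (starRingEnd ℂ) (addChar p F s u) *
            ∑ x : Fin n → F, addChar p F y x * f (x - Matrix.vecMul s H) := by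
          refine Finset.sum_congr rfl fun s _ => ?_
          rw [Finset.mul_sum]
          exact Finset.sum_congr rfl fun x _ => by ring
      _ = ∑ s : Fin m → F, ψ (∑ j, s j * (Matrix.mulVec H y j - u j)) * S := by
          refine Finset.sum_congr rfl fun s _ => ?_
          rw [hinner s, hconj s, ← mul_assoc, ← AddChar.map_add_eq_mul]
          congr 2
          simp only [mul_sub, Finset.sum_sub_distrib]
          have huv : ∑ i, u i * s i = ∑ i, s i * u i :=
            Finset.sum_congr rfl fun i _ => mul_comm _ _
          rw [huv]; ring
      _ = _ := by rw [Finset.sum_mul]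
  -- character sum over s
  have hcharsum : (∑ s : Fin m → F, ψ (∑ j, s j * (Matrix.mulVec H y j - u j)))
      = if Matrix.mulVec H y = u then (q : ℂ) ^ m else 0 := by
    have hprod : ∀ s : Fin m → F, ψ (∑ j, s j * (Matrix.mulVec H y j - u j))
        = ∏ j, ψ (s j * (Matrix.mulVec H y j - u j)) := fun s => psiF_map_sum p F _ _
    simp_rw [hprod]
    rw [← Fintype.piFinset_univ,
      Finset.sum_prod_piFinset Finset.univ (fun j t => ψ (t * (Matrix.mulVec H y j - u j)))]
    simp only [hψ]
    simp_rw [psiF_sum_mulShift, hq]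
    by_cases h : Matrix.mulVec H y = u
    · rw [if_pos h]
      have : ∀ j, Matrix.mulVec H y j - u j = 0 := fun j => by rw [h, sub_self]
      simp [this]
    · rw [if_neg h]
      obtain ⟨j, hj⟩ := Function.ne_iff.mp h
      refine Finset.prod_eq_zero (Finset.mem_univ j) ?_
      rw [if_neg (sub_ne_zero.mpr hj)]
  rw [hmain, hcharsum]
  by_cases h : Matrix.mulVec H y = u
  · rw [if_pos h, if_pos h]; ring
  · rw [if_neg h, if_neg h]; ring
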